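/- Let λ > 0 and let b_n > 0 solve √(π/2) b_n exp(b_n²/2) = n, and set a_n = 1/b_n. Then for every real x, n(1 - F_λ(a_n x + b_n)) → e^{-x} as n → ∞, where F_λ is the skew-normal cdf with parameter λ. -/

import Mathlib

open Real MeasureTheory Filter Set

noncomputable def stdPhi (x : ℝ) : ℝ := (Real.sqrt (2 * Real.pi))⁻¹ * Real.exp (-x ^ 2 / 2)

noncomputable def stdCdf (x : ℝ) : ℝ := ∫ t in Set.Iic x, stdPhi t

lemma stdPhi_pos (x : ℝ) : 0 < stdPhi x := by
  unfold stdPhi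
  positivity

lemma stdPhi_eq (x : ℝ) : stdPhi x = (Real.sqrt (2 * Real.pi))⁻¹ * Real.exp (-(1/2) * x ^ 2) := by
  unfold stdPhi; ring_nf

lemma stdPhi_neg (x : ℝ) : stdPhi (-x) = stdPhi x := by
  unfold stdPhi; rw [neg_pow]; ring_nf

lemma measurable_stdPhi : Measurable stdPhi := by
  unfold stdPhi
  fun_prop

lemma stdPhi_funext : stdPhi = fun x => (Real.sqrt (2 * Real.pi))⁻¹ * Real.exp (-(1/2) * x ^ 2) :=
  funext stdPhi_eq

lemma integrable_stdPhi : Integrable stdPhi := by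
  rw [stdPhi_funext]
  exact (integrable_exp_neg_mul_sq (by norm_num : (0:ℝ) < 1/2)).const_mul _

lemma integral_stdPhi : ∫ x, stdPhi x = 1 := by
  simp_rw [stdPhi_eq]
  rw [MeasureTheory.integral_const_mul, integral_gaussian]
  rw [show Real.pi / (1/2) = 2 * Real.pi by ring]
  rw [inv_mul_cancel₀]
  exact (Real.sqrt_pos.2 (by positivity)).ne'

lemma stdCdf_nonneg (x : ℝ) : 0 ≤ stdCdf x :=
  setIntegral_nonneg measurableSet_Iic (fun t _ => (stdPhi_pos t).le)

lemma stdCdf_le_one (x : ℝ) : stdCdf x ≤ 1 := by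
  rw [← integral_stdPhi]
  exact setIntegral_le_integral integrable_stdPhi
    (Filter.Eventually.of_forall (fun t => (stdPhi_pos t).le))

lemma stdCdf_mono : Monotone stdCdf := by
  intro u v huv
  exact setIntegral_mono_set integrable_stdPhi.integrableOn
    (Filter.Eventually.of_forall (fun t => (stdPhi_pos t).le))
    (HasSubset.Subset.eventuallyLE (Set.Iic_subset_Iic.2 huv))

lemma stdCdf_add_tail (x : ℝ) : stdCdf x + ∫ t in Set.Ioi x, stdPhi t = 1 := by
  rw [← integral_stdPhi]
  exact intervalIntegral.integral_Iic_add_Ioi integrable_stdPhi.integrableOn integrable_stdPhi.integrableOn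

lemma stdCdf_neg (x : ℝ) : stdCdf (-x) = ∫ t in Set.Ioi x, stdPhi t := by
  unfold stdCdf
  rw [show (∫ t in Set.Iic (-x), stdPhi t) = ∫ t in Set.Iic (-x), stdPhi (-t) from
    setIntegral_congr_fun measurableSet_Iic (fun t _ => (stdPhi_neg t).symm)]
  rw [integral_comp_neg_Iic, neg_neg]

lemma hasDerivAt_stdPhi (s : ℝ) : HasDerivAt stdPhi (-s * stdPhi s) s := by
  have h1 : HasDerivAt (fun u : ℝ => -u ^ 2 / 2) (-(2 * s ^ 1) / 2) s :=
    ((hasDerivAt_pow 2 s).neg.div_const 2)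
  have h2 := (h1.exp.const_mul ((Real.sqrt (2 * Real.pi))⁻¹))
  unfold stdPhi
  exact h2.congr_deriv (by ring)

lemma tendsto_stdPhi_atTop : Tendsto stdPhi atTop (nhds 0) := by
  have h1 : Tendsto (fun u : ℝ => -u ^ 2 / 2) atTop atBot := by
    apply Tendsto.atBot_div_const (by norm_num : (0:ℝ) < 2)
    exact tendsto_neg_atTop_atBot.comp (tendsto_pow_atTop (by norm_num : 2 ≠ 0))
  have h2 := (Real.tendsto_exp_atBot.comp h1).const_mul ((Real.sqrt (2 * Real.pi))⁻¹)
  rw [mul_zero] at h2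
  exact h2

lemma integrable_id_mul_stdPhi : Integrable (fun s : ℝ => s * stdPhi s) := by
  have h := integrable_rpow_mul_exp_neg_mul_sq (by norm_num : (0:ℝ) < 1/2) (by norm_num : (-1:ℝ) < 1)
  have h2 := h.const_mul ((Real.sqrt (2 * Real.pi))⁻¹)
  exact h2.congr (Filter.Eventually.of_forall (fun s => by beta_reduce; rw [Real.rpow_one, stdPhi_eq]; ring))

lemma integral_Ioi_id_mul_stdPhi (t : ℝ) : ∫ s in Set.Ioi t, s * stdPhi s = stdPhi t := by
  have h := integral_Ioi_of_hasDerivAt_of_tendsto' (f := fun u => -stdPhi u)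
    (f' := fun s => s * stdPhi s) (a := t) (m := 0)
    (fun u _ => (hasDerivAt_stdPhi u).neg.congr_deriv (by ring))
    integrable_id_mul_stdPhi.integrableOn
    (by simpa using tendsto_stdPhi_atTop.neg)
  simpa using h

lemma tail_le_of_pos {t : ℝ} (ht : 0 < t) : ∫ s in Set.Ioi t, stdPhi s ≤ stdPhi t / t := by
  have h1 : ∫ s in Set.Ioi t, stdPhi s ≤ ∫ s in Set.Ioi t, t⁻¹ * (s * stdPhi s) := by
    apply setIntegral_mono_on integrable_stdPhi.integrableOn
      ((integrable_id_mul_stdPhi.const_mul t⁻¹).integrableOn) measurableSet_Ioi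
    intro s hs
    have hsp := stdPhi_pos s
    have h2 : t * t⁻¹ = 1 := mul_inv_cancel₀ ht.ne'
    nlinarith [mul_pos (inv_pos.2 ht) (mul_pos (sub_pos.2 (Set.mem_Ioi.1 hs)) hsp)]
  rw [MeasureTheory.integral_const_mul, integral_Ioi_id_mul_stdPhi] at h1
  rw [div_eq_inv_mul]
  exact h1

lemma le_tail_of_one_le {t : ℝ} (ht : 1 ≤ t) :
    stdPhi t * (t⁻¹ - t⁻¹ ^ 3) ≤ ∫ s in Set.Ioi t, stdPhi s := by
  have ht0 : 0 < t := lt_of_lt_of_le one_pos ht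
  have hint : IntegrableOn (fun u : ℝ => (1 - 3 * u⁻¹ ^ 4) * stdPhi u) (Set.Ioi t) := by
    apply Integrable.mono' ((integrable_stdPhi.const_mul 3).integrableOn)
    · exact ((measurable_const.sub
        ((measurable_inv.pow_const 4).const_mul 3)).mul measurable_stdPhi).aestronglyMeasurable
    · filter_upwards [ae_restrict_mem measurableSet_Ioi] with u hu
      have hu1 : (1:ℝ) ≤ u := le_trans ht (le_of_lt hu)
      have hui1 : u⁻¹ ≤ 1 := inv_le_one_of_one_le₀ hu1
      have h4 : u⁻¹ ^ 4 ≤ 1 := pow_le_one₀ (inv_nonneg.2 (by linarith)) hui1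
      have h5 : (0:ℝ) ≤ u⁻¹ ^ 4 := pow_nonneg (inv_nonneg.2 (by linarith)) 4
      rw [Real.norm_eq_abs, abs_mul, abs_of_pos (stdPhi_pos u)]
      have habs : |1 - 3 * u⁻¹ ^ 4| ≤ 3 := by
        rw [abs_le]; constructor <;> nlinarith
      nlinarith [stdPhi_pos u]
  have hderiv : ∀ u ∈ Set.Ici t, HasDerivAt (fun y : ℝ => (y⁻¹ ^ 3 - y⁻¹) * stdPhi y)
      ((1 - 3 * u⁻¹ ^ 4) * stdPhi u) u := by
    intro u hu
    have hu0 : u ≠ 0 := ne_of_gt (lt_of_lt_of_le ht0 hu)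
    have h1 : HasDerivAt (fun y : ℝ => y⁻¹ ^ 3 - y⁻¹)
        (3 * u⁻¹ ^ 2 * (-(u ^ 2)⁻¹) - (-(u ^ 2)⁻¹)) u := by
      have hi := hasDerivAt_inv hu0
      exact ((hi.pow 3).sub hi).congr_deriv (by norm_num)
    have h2 := h1.mul (hasDerivAt_stdPhi u)
    exact h2.congr_deriv (by unfold stdPhi; field_simp; ring)
  have hft : Tendsto (fun y : ℝ => (y⁻¹ ^ 3 - y⁻¹) * stdPhi y) atTop (nhds 0) := by
    have h1 : Tendsto (fun y : ℝ => y⁻¹ ^ 3 - y⁻¹) atTop (nhds 0) := by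
      have hi := tendsto_inv_atTop_zero (𝕜 := ℝ)
      simpa using (hi.pow 3).sub hi
    simpa using h1.mul tendsto_stdPhi_atTop
  have heq := integral_Ioi_of_hasDerivAt_of_tendsto' hderiv hint hft
  have hle : ∫ u in Set.Ioi t, (1 - 3 * u⁻¹ ^ 4) * stdPhi u ≤ ∫ s in Set.Ioi t, stdPhi s := by
    apply setIntegral_mono_on hint integrable_stdPhi.integrableOn measurableSet_Ioi
    intro u hu
    nlinarith [stdPhi_pos u, pow_nonneg (inv_nonneg.2 (le_of_lt (lt_trans ht0 hu))) 4]
  rw [heq] at hle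
  have : stdPhi t * (t⁻¹ - t⁻¹ ^ 3) = 0 - (t⁻¹ ^ 3 - t⁻¹) * stdPhi t := by ring
  linarith

lemma stdCdf_neg' (x : ℝ) : stdCdf (-x) = 1 - stdCdf x := by
  rw [stdCdf_neg]
  have := stdCdf_add_tail x
  linarith

noncomputable def snCdf (l x : ℝ) : ℝ := ∫ t in Set.Iic x, 2 * stdPhi t * stdCdf (l * t)

lemma measurable_snDen (l : ℝ) : Measurable (fun t : ℝ => 2 * stdPhi t * stdCdf (l * t)) :=
  (measurable_stdPhi.const_mul 2).mul (stdCdf_mono.measurable.comp (measurable_id.const_mul l))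

lemma snDen_nonneg (l t : ℝ) : 0 ≤ 2 * stdPhi t * stdCdf (l * t) :=
  mul_nonneg (by linarith [stdPhi_pos t]) (stdCdf_nonneg _)

lemma snDen_le (l t : ℝ) : 2 * stdPhi t * stdCdf (l * t) ≤ 2 * stdPhi t := by
  nlinarith [stdPhi_pos t, stdCdf_le_one (l * t), stdCdf_nonneg (l * t)]

lemma integrable_snDen (l : ℝ) : Integrable (fun t : ℝ => 2 * stdPhi t * stdCdf (l * t)) := by
  apply Integrable.mono' (integrable_stdPhi.const_mul 2) (measurable_snDen l).aestronglyMeasurable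
  apply Filter.Eventually.of_forall
  intro t
  rw [Real.norm_eq_abs, abs_of_nonneg (snDen_nonneg l t)]
  exact snDen_le l t

lemma integral_snDen (l : ℝ) : ∫ t : ℝ, 2 * stdPhi t * stdCdf (l * t) = 1 := by
  have hneg : ∫ t : ℝ, 2 * stdPhi t * stdCdf (l * t)
      = ∫ t : ℝ, 2 * stdPhi t * (1 - stdCdf (l * t)) := by
    conv_lhs => rw [← integral_neg_eq_self (fun t : ℝ => 2 * stdPhi t * stdCdf (l * t)) volume]
    congr 1
    funext t
    rw [stdPhi_neg, show l * -t = -(l * t) from by ring, stdCdf_neg']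
  have hsub : ∫ t : ℝ, 2 * stdPhi t * (1 - stdCdf (l * t))
      = (∫ t : ℝ, 2 * stdPhi t) - ∫ t : ℝ, 2 * stdPhi t * stdCdf (l * t) := by
    rw [← integral_sub (integrable_stdPhi.const_mul 2) (integrable_snDen l)]
    congr 1
    funext t
    ring
  have htot : ∫ t : ℝ, 2 * stdPhi t = 2 := by
    rw [MeasureTheory.integral_const_mul, integral_stdPhi]; norm_num
  linarith [hneg, hsub, htot]

lemma one_sub_snCdf (l x : ℝ) :
    1 - snCdf l x = ∫ t in Set.Ioi x, 2 * stdPhi t * stdCdf (l * t) := by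
  have h := intervalIntegral.integral_Iic_add_Ioi (b := x) (μ := volume)
    (integrable_snDen l).integrableOn (integrable_snDen l).integrableOn
  rw [integral_snDen l] at h
  unfold snCdf
  linarith

lemma stdCdf_lower {u : ℝ} (hu : 0 < u) : 1 - stdPhi u / u ≤ stdCdf u := by
  have h1 := stdCdf_add_tail u
  have h2 := tail_le_of_pos hu
  linarith

lemma snTail_le (l : ℝ) {t : ℝ} (ht : 0 < t) :
    ∫ s in Set.Ioi t, 2 * stdPhi s * stdCdf (l * s) ≤ 2 * (stdPhi t / t) := by
  have h1 : ∫ s in Set.Ioi t, 2 * stdPhi s * stdCdf (l * s) ≤ ∫ s in Set.Ioi t, 2 * stdPhi s := by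
    apply setIntegral_mono_on (integrable_snDen l).integrableOn
      ((integrable_stdPhi.const_mul 2).integrableOn) measurableSet_Ioi
    exact fun s _ => snDen_le l s
  rw [MeasureTheory.integral_const_mul] at h1
  have h2 := tail_le_of_pos ht
  linarith

lemma le_snTail {l : ℝ} (hl : 0 < l) {t : ℝ} (ht : 1 ≤ t) :
    2 * (1 - stdPhi (l * t) / (l * t)) * (stdPhi t * (t⁻¹ - t⁻¹ ^ 3))
      ≤ ∫ s in Set.Ioi t, 2 * stdPhi s * stdCdf (l * s) := by
  have ht0 : 0 < t := lt_of_lt_of_le one_pos ht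
  have hlt : 0 < l * t := mul_pos hl ht0
  have hclow : 1 - stdPhi (l * t) / (l * t) ≤ stdCdf (l * t) := stdCdf_lower hlt
  have hc0 : 0 ≤ stdCdf (l * t) := stdCdf_nonneg _
  -- step: ∫ 2φ(s) stdCdf(l t) ≤ ∫ 2φ(s) stdCdf(l s)
  have h1 : ∫ s in Set.Ioi t, (2 * stdCdf (l * t)) * stdPhi s
      ≤ ∫ s in Set.Ioi t, 2 * stdPhi s * stdCdf (l * s) := by
    apply setIntegral_mono_on
      ((integrable_stdPhi.const_mul _).integrableOn)
      (integrable_snDen l).integrableOn measurableSet_Ioi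
    intro s hs
    have hmono : stdCdf (l * t) ≤ stdCdf (l * s) :=
      stdCdf_mono (by nlinarith [Set.mem_Ioi.1 hs])
    nlinarith [stdPhi_pos s]
  rw [MeasureTheory.integral_const_mul] at h1
  have h2 := le_tail_of_one_le ht
  have h3 : 0 ≤ stdPhi t * (t⁻¹ - t⁻¹ ^ 3) := by
    have h4 : t⁻¹ ≤ 1 := inv_le_one_of_one_le₀ ht
    have h5 : 0 ≤ t⁻¹ := inv_nonneg.2 ht0.le
    have h6 : t⁻¹ ^ 3 ≤ t⁻¹ := by nlinarith [sq_nonneg t⁻¹, mul_nonneg h5 h5]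
    exact mul_nonneg (stdPhi_pos t).le (by linarith)
  calc 2 * (1 - stdPhi (l * t) / (l * t)) * (stdPhi t * (t⁻¹ - t⁻¹ ^ 3))
      ≤ 2 * stdCdf (l * t) * (stdPhi t * (t⁻¹ - t⁻¹ ^ 3)) := by nlinarith
    _ ≤ 2 * stdCdf (l * t) * ∫ s in Set.Ioi t, stdPhi s := by nlinarith
    _ ≤ ∫ s in Set.Ioi t, 2 * stdPhi s * stdCdf (l * s) := h1

lemma key_eq {b t x : ℝ} (hb : 0 < b) (ht : 0 < t) (hxt : t = b⁻¹ * x + b) :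
    (Real.sqrt (Real.pi / 2) * b * Real.exp (b ^ 2 / 2)) * (2 * (stdPhi t / t))
      = (b / t) * Real.exp (-x - x ^ 2 / (2 * b ^ 2)) := by
  have hs : Real.sqrt (2 * Real.pi) = 2 * Real.sqrt (Real.pi / 2) := by
    rw [show (2 * Real.pi) = 2 ^ 2 * (Real.pi / 2) by ring,
      Real.sqrt_mul (by positivity), Real.sqrt_sq (by norm_num)]
  have hsp : 0 < Real.sqrt (Real.pi / 2) := Real.sqrt_pos.2 (by positivity)
  have h1 : (Real.sqrt (Real.pi / 2) * b * Real.exp (b ^ 2 / 2)) * (2 * (stdPhi t / t))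
      = (b / t) * (Real.exp (b ^ 2 / 2) * Real.exp (-t ^ 2 / 2)) := by
    unfold stdPhi
    rw [hs]
    field_simp
  rw [h1, ← Real.exp_add]
  congr 1
  rw [hxt]
  field_simp
  ring

lemma b_tendsto_atTop (b : ℕ → ℝ)
    (hb : ∀ n : ℕ, 1 ≤ n → 0 < b n ∧
      Real.sqrt (Real.pi / 2) * b n * Real.exp ((b n) ^ 2 / 2) = n) :
    Tendsto b atTop atTop := by
  rw [tendsto_atTop]
  intro M
  have hM1 : (1:ℝ) ≤ max M 1 := le_max_right _ _
  have hM0 : (0:ℝ) < max M 1 := lt_of_lt_of_le one_pos hM1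
  have hev : ∀ᶠ n : ℕ in atTop,
      Real.sqrt (Real.pi / 2) * max M 1 * Real.exp ((max M 1) ^ 2 / 2) < (n : ℝ) :=
    (tendsto_natCast_atTop_atTop).eventually_gt_atTop _
  filter_upwards [hev, eventually_ge_atTop 1] with n hn hn1
  have h := hb n hn1
  by_contra hbn
  push_neg at hbn
  have hbM : b n < max M 1 := lt_of_lt_of_le hbn (le_max_left _ _)
  have hsp : 0 < Real.sqrt (Real.pi / 2) := Real.sqrt_pos.2 (by positivity)
  have hle : Real.sqrt (Real.pi / 2) * b n * Real.exp ((b n) ^ 2 / 2)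
      ≤ Real.sqrt (Real.pi / 2) * max M 1 * Real.exp ((max M 1) ^ 2 / 2) := by
    have he : Real.exp ((b n) ^ 2 / 2) ≤ Real.exp ((max M 1) ^ 2 / 2) := by
      apply Real.exp_le_exp.2
      nlinarith [h.1]
    have h2 : Real.sqrt (Real.pi / 2) * b n ≤ Real.sqrt (Real.pi / 2) * max M 1 :=
      mul_le_mul_of_nonneg_left hbM.le hsp.le
    exact mul_le_mul h2 he (Real.exp_pos _).le (by positivity)
  rw [h.2] at hle
  linarith

theorem stmt_7 (l : ℝ) (hl : 0 < l) (b : ℕ → ℝ)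
    (hb : ∀ n : ℕ, 1 ≤ n → 0 < b n ∧
      Real.sqrt (Real.pi / 2) * b n * Real.exp ((b n) ^ 2 / 2) = n)
    (x : ℝ) :
    Tendsto (fun n : ℕ => (n : ℝ) * (1 - snCdf l ((b n)⁻¹ * x + b n))) atTop
      (nhds (Real.exp (-x))) := by
  have hbt : Tendsto b atTop atTop := b_tendsto_atTop b hb
  set t : ℕ → ℝ := fun n => (b n)⁻¹ * x + b n with htdef
  have hgoal : (fun n : ℕ => (n : ℝ) * (1 - snCdf l ((b n)⁻¹ * x + b n)))
      = fun n : ℕ => (n : ℝ) * (1 - snCdf l (t n)) := rfl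
  rw [hgoal]
  -- t tends to atTop
  have hinvb : Tendsto (fun n => (b n)⁻¹) atTop (nhds 0) := tendsto_inv_atTop_zero.comp hbt
  have htt : Tendsto t atTop atTop := by
    have h0 : Tendsto (fun n : ℕ => (b n)⁻¹ * x) atTop (nhds 0) := by
      simpa using hinvb.mul_const x
    exact h0.add_atTop hbt
  have hb2 : Tendsto (fun n => (b n) ^ 2) atTop atTop := by
    have := hbt.atTop_mul_atTop₀ hbt
    apply this.congr
    intro n; ring
  -- the upper comparison sequence
  set U : ℕ → ℝ := fun n => (b n / t n) * Real.exp (-x - x ^ 2 / (2 * (b n) ^ 2)) with hUdef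
  have hUlim : Tendsto U atTop (nhds (Real.exp (-x))) := by
    have hbd : Tendsto (fun n => b n / t n) atTop (nhds 1) := by
      have h1 : Tendsto (fun n => x * ((b n) ^ 2)⁻¹ + 1) atTop (nhds 1) := by
        have h2 := (tendsto_inv_atTop_zero.comp hb2).const_mul x
        have h3 := h2.add_const 1
        simpa using h3
      have h4 := h1.inv₀ one_ne_zero
      rw [inv_one] at h4
      apply h4.congr'
      filter_upwards [hbt.eventually_gt_atTop 0, htt.eventually_gt_atTop 0] with n hbn htn
      have hb0 : b n ≠ 0 := hbn.ne'
      have htn0 : t n ≠ 0 := htn.ne'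
      have ht' : t n = b n * (x * ((b n) ^ 2)⁻¹ + 1) := by
        show (b n)⁻¹ * x + b n = _
        field_simp
      have hc : x * ((b n) ^ 2)⁻¹ + 1 ≠ 0 := by
        intro h
        rw [ht', h, mul_zero] at htn
        exact lt_irrefl 0 htn
      rw [ht']
      field_simp
    have hexp : Tendsto (fun n => Real.exp (-x - x ^ 2 / (2 * (b n) ^ 2))) atTop
        (nhds (Real.exp (-x))) := by
      have h1 : Tendsto (fun n => 2 * (b n) ^ 2) atTop atTop := by
        have := hb2.const_mul_atTop (by norm_num : (0:ℝ) < 2)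
        exact this
      have h2 : Tendsto (fun n => -x - x ^ 2 / (2 * (b n) ^ 2)) atTop (nhds (-x)) := by
        have h3 := (tendsto_inv_atTop_zero.comp h1).const_mul (x ^ 2)
        have h4 := (tendsto_const_nhds (x := -x) (f := atTop)).sub h3
        simp only [mul_zero, sub_zero] at h4
        apply h4.congr
        intro n
        simp [div_eq_mul_inv]
      exact (Real.continuous_exp.tendsto _).comp h2
    have h7 := hbd.mul hexp
    rw [one_mul] at h7
    exact h7
  -- lower comparison sequence
  have hinvt : Tendsto (fun n => (t n)⁻¹) atTop (nhds 0) := tendsto_inv_atTop_zero.comp htt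
  have hlt : Tendsto (fun n => l * t n) atTop atTop := htt.const_mul_atTop hl
  have hLlim : Tendsto (fun n : ℕ => U n * (1 - ((t n)⁻¹) ^ 2)
      * (1 - stdPhi (l * t n) / (l * t n))) atTop (nhds (Real.exp (-x))) := by
    have h1 : Tendsto (fun n => 1 - ((t n)⁻¹) ^ 2) atTop (nhds 1) := by
      have := (tendsto_const_nhds (x := (1:ℝ)) (f := atTop)).sub (hinvt.pow 2)
      simpa using this
    have h2 : Tendsto (fun n => 1 - stdPhi (l * t n) / (l * t n)) atTop (nhds 1) := by
      have h3 : Tendsto (fun n => stdPhi (l * t n) / (l * t n)) atTop (nhds 0) := by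
        have := (tendsto_stdPhi_atTop.comp hlt).mul (tendsto_inv_atTop_zero.comp hlt)
        simp only [mul_zero] at this
        apply this.congr
        intro n
        simp [div_eq_mul_inv, Function.comp]
      have := (tendsto_const_nhds (x := (1:ℝ)) (f := atTop)).sub h3
      simpa using this
    have h5 := (hUlim.mul h1).mul h2
    have h6 : Real.exp (-x) * 1 * 1 = Real.exp (-x) := by ring
    rw [h6] at h5
    exact h5
  -- squeeze
  apply tendsto_of_tendsto_of_tendsto_of_le_of_le' hLlim hUlim
  · -- L n ≤ n * (1 - snCdf l (t n)) eventually
    filter_upwards [eventually_ge_atTop 1, htt.eventually_ge_atTop 1,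
      hbt.eventually_gt_atTop 0] with n hn1 ht1 hb0
    have ht0 : 0 < t n := lt_of_lt_of_le one_pos ht1
    have hbs := (hb n hn1).2
    have htail := one_sub_snCdf l (t n)
    have hUn : U n = (n : ℝ) * (2 * (stdPhi (t n) / t n)) := by
      rw [← hbs]
      exact (key_eq hb0 ht0 rfl).symm
    calc U n * (1 - ((t n)⁻¹) ^ 2) * (1 - stdPhi (l * t n) / (l * t n))
        = (n : ℝ) * (2 * (1 - stdPhi (l * t n) / (l * t n))
          * (stdPhi (t n) * ((t n)⁻¹ - ((t n)⁻¹) ^ 3))) := by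
          rw [hUn]
          field_simp
      _ ≤ (n : ℝ) * ∫ s in Set.Ioi (t n), 2 * stdPhi s * stdCdf (l * s) :=
          mul_le_mul_of_nonneg_left (le_snTail hl ht1) (Nat.cast_nonneg n)
      _ = (n : ℝ) * (1 - snCdf l (t n)) := by rw [← htail]
  · -- n * (1 - snCdf l (t n)) ≤ U n eventually
    filter_upwards [eventually_ge_atTop 1, htt.eventually_ge_atTop 1,
      hbt.eventually_gt_atTop 0] with n hn1 ht1 hb0
    have ht0 : 0 < t n := lt_of_lt_of_le one_pos ht1
    have hbs := (hb n hn1).2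
    have htail := one_sub_snCdf l (t n)
    calc (n : ℝ) * (1 - snCdf l (t n))
        = (n : ℝ) * ∫ s in Set.Ioi (t n), 2 * stdPhi s * stdCdf (l * s) := by rw [htail]
      _ ≤ (n : ℝ) * (2 * (stdPhi (t n) / t n)) :=
          mul_le_mul_of_nonneg_left (snTail_le l ht0) (Nat.cast_nonneg n)
      _ = U n := by rw [← hbs]; exact key_eq hb0 ht0 rfl
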